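/- Let p be a prime and write (p-1)d + 1 = p^a·m with m not divisible by p. Then the Hamming graph H(p,d) has an efficient (1,k)-dominating function if and only if 0 ≤ k ≤ (p-1)d+1 and m divides k. -/

import Mathlib

open SimpleGraph Finset Matrix Polynomial

/-- `f` is an efficient `(j,k)`-dominating function on `G`:
it takes values in `{0,…,j}` and sums to `k` over every closed neighbourhood. -/
def EffDom {V : Type*} [Fintype V] (G : SimpleGraph V) [DecidableRel G.Adj]
    (j k : ℕ) (f : V → ℕ) : Prop :=
  (∀ v, f v ≤ j) ∧ ∀ v : V, f v + ∑ u ∈ G.neighborFinset v, f u = k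

/-- The Hamming graph `H(q,d)`: vertices are the words of length `d` over an alphabet
of size `q`, adjacent iff at Hamming distance `1`. -/
def hammingGraph (q d : ℕ) : SimpleGraph (Fin d → Fin q) where
  Adj x y := hammingDist x y = 1
  symm := ⟨fun x y (h : hammingDist x y = 1) => by rwa [hammingDist_comm]⟩
  loopless := ⟨fun x (h : hammingDist x x = 1) => by simp [hammingDist_self] at h⟩

instance (q d : ℕ) : DecidableRel (hammingGraph q d).Adj :=
  fun _ _ => Nat.decEq _ _

lemma sum_nbhd {M : Type*} [AddCommMonoid M] {p d : ℕ} (v : Fin d → Fin p)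
    (F : (Fin d → Fin p) → M) :
    ∑ x ∈ (univ : Finset (Fin d)).sigma (fun i => univ.erase (v i)),
        F (Function.update v x.1 x.2)
      = ∑ u ∈ (hammingGraph p d).neighborFinset v, F u := by
  apply Finset.sum_bij (fun x _ => Function.update v x.1 x.2)
  · rintro ⟨i, c⟩ hx
    rw [Finset.mem_sigma, Finset.mem_erase] at hx
    rw [SimpleGraph.mem_neighborFinset]
    show hammingDist v (Function.update v i c) = 1
    have : (univ.filter fun j => v j ≠ Function.update v i c j) = {i} := by
      ext j
      simp only [Finset.mem_filter, Finset.mem_univ, true_and, Finset.mem_singleton]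
      rcases eq_or_ne j i with rfl | hj
      · simp [Ne.symm hx.2.1]
      · simp [Function.update_of_ne hj, hj]
    rw [hammingDist, this, Finset.card_singleton]
  · rintro ⟨i, c⟩ hx ⟨i', c'⟩ hx' hE
    rw [Finset.mem_sigma, Finset.mem_erase] at hx hx'
    rcases eq_or_ne i i' with rfl | hii
    · have := congrFun hE i
      simp at this
      simp [this]
    · exfalso
      have := congrFun hE i
      simp [Function.update_of_ne hii] at this
      exact hx.2.1 this
  · intro u hu
    rw [SimpleGraph.mem_neighborFinset] at hu
    have hu' : (univ.filter fun j => v j ≠ u j).card = 1 := hu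
    obtain ⟨i, hi⟩ := Finset.card_eq_one.mp hu'
    have hiu : v i ≠ u i := by
      have := hi ▸ Finset.mem_singleton_self i
      exact (Finset.mem_filter.mp this).2
    refine ⟨⟨i, u i⟩, ?_, ?_⟩
    · rw [Finset.mem_sigma, Finset.mem_erase]
      exact ⟨Finset.mem_univ _, Ne.symm hiu, Finset.mem_univ _⟩
    · funext j
      rcases eq_or_ne j i with rfl | hj
      · simp
      · rw [Function.update_of_ne hj]
        by_contra hne
        have : j ∈ univ.filter fun j => v j ≠ u j := by simp [hne]
        rw [hi, Finset.mem_singleton] at this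
        exact hj this
  · intros; rfl

lemma deg_hamming {p d : ℕ} (v : Fin d → Fin p) :
    ((hammingGraph p d).neighborFinset v).card = d * (p - 1) := by
  have := sum_nbhd (M := ℕ) v (fun _ => 1)
  simp only [Finset.sum_const, smul_eq_mul, mul_one] at this
  rw [← this, Finset.card_sigma]
  simp [Finset.card_erase_of_mem, mul_comm]

variable (p a : ℕ) [Fact p.Prime]


instance scalSetoid : Setoid {g : Fin a → ZMod p // g ≠ 0} where
  r x y := ∃ e : ZMod p, e ≠ 0 ∧ e • (x : Fin a → ZMod p) = (y : Fin a → ZMod p)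
  iseqv := by
    constructor
    · exact fun x => ⟨1, one_ne_zero, one_smul _ _⟩
    · rintro x y ⟨e, he, hxy⟩
      exact ⟨e⁻¹, inv_ne_zero he, by rw [← hxy, smul_smul, inv_mul_cancel₀ he, one_smul]⟩
    · rintro x y zz ⟨e, he, hxy⟩ ⟨e', he', hyz⟩
      exact ⟨e' * e, mul_ne_zero he' he, by rw [← hyz, ← hxy, smul_smul]⟩

instance : DecidableRel (α := {g : Fin a → ZMod p // g ≠ 0}) (· ≈ ·) := fun x y =>
  inferInstanceAs (Decidable (∃ e : ZMod p, e ≠ 0 ∧ e • (x : Fin a → ZMod p) = y))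


-- unique scalar lemma

-- orbit count
lemma count_orbit (q : Quotient (scalSetoid p a)) (g : Fin a → ZMod p) (hg : g ≠ 0) :
    ∑ e ∈ (univ : Finset (ZMod p)).erase 0,
        (if e • (q.out : Fin a → ZMod p) = g then 1 else 0)
      = if ⟦(⟨g, hg⟩ : {g : Fin a → ZMod p // g ≠ 0})⟧ = q then 1 else 0 := by
  by_cases hex : ∃ e : ZMod p, e ≠ 0 ∧ e • (q.out : Fin a → ZMod p) = g
  · obtain ⟨e0, he0, heq⟩ := hex
    have hq : ⟦(⟨g, hg⟩ : {g : Fin a → ZMod p // g ≠ 0})⟧ = q := by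
      rw [← Quotient.out_eq q]
      exact Quotient.sound (Setoid.symm ⟨e0, he0, heq⟩)
    rw [if_pos hq, ← Finset.card_filter]
    have : ((univ : Finset (ZMod p)).erase 0).filter
        (fun e => e • (q.out : Fin a → ZMod p) = g) = {e0} := by
      ext e
      simp only [Finset.mem_filter, Finset.mem_erase, Finset.mem_univ, true_and,
        Finset.mem_singleton, and_true]
      constructor
      · rintro ⟨-, he⟩
        exact smul_left_injective (ZMod p) q.out.2 (he.trans heq.symm)
      · rintro rfl; exact ⟨he0, heq⟩
    rw [this, Finset.card_singleton]
  · have hq : ¬ ⟦(⟨g, hg⟩ : {g : Fin a → ZMod p // g ≠ 0})⟧ = q := by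
      intro hq
      rw [← Quotient.out_eq q] at hq
      obtain ⟨e, he, heq⟩ := Setoid.symm (Quotient.exact hq)
      exact hex ⟨e, he, heq⟩
    rw [if_neg hq]
    refine Finset.sum_eq_zero fun e he => ?_
    rw [if_neg]
    intro hEq
    rw [Finset.mem_erase] at he
    exact hex ⟨e, he.1, hEq⟩

lemma card_class (q : Quotient (scalSetoid p a)) :
    (univ.filter (fun x : {g : Fin a → ZMod p // g ≠ 0} => ⟦x⟧ = q)).card = p - 1 := by
  have hcard : ((univ : Finset (ZMod p)).erase 0).card = p - 1 := by
    rw [Finset.card_erase_of_mem (Finset.mem_univ _), Finset.card_univ, ZMod.card]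
  rw [← hcard]
  symm
  apply Finset.card_bij (fun (e : ZMod p) (he : e ∈ (univ : Finset (ZMod p)).erase 0) =>
    (⟨e • (q.out : Fin a → ZMod p),
      smul_ne_zero (Finset.mem_erase.mp he).1 q.out.2⟩ : {g : Fin a → ZMod p // g ≠ 0}))
  · intro e he
    rw [Finset.mem_filter]
    refine ⟨Finset.mem_univ _, ?_⟩
    have hrel : (scalSetoid p a).r q.out ⟨e • (q.out : Fin a → ZMod p),
        smul_ne_zero (Finset.mem_erase.mp he).1 q.out.2⟩ :=
      ⟨e, (Finset.mem_erase.mp he).1, rfl⟩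
    exact ((Quotient.sound hrel).symm).trans (Quotient.out_eq q)
  · intro e₁ h₁ e₂ h₂ hEq
    have := congrArg Subtype.val hEq
    exact smul_left_injective (ZMod p) q.out.2 this
  · intro x hx
    rw [Finset.mem_filter] at hx
    have : x ≈ q.out := Quotient.exact (hx.2.trans (Quotient.out_eq q).symm)
    obtain ⟨e, he, heq⟩ := this
    refine ⟨e⁻¹, Finset.mem_erase.mpr ⟨inv_ne_zero he, Finset.mem_univ _⟩, ?_⟩
    apply Subtype.ext
    show e⁻¹ • (q.out : Fin a → ZMod p) = x
    rw [← heq, smul_smul, inv_mul_cancel₀ he, one_smul]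

lemma cardQ_mul : Fintype.card (Quotient (scalSetoid p a)) * (p - 1) = p ^ a - 1 := by
  have h1 : Fintype.card {g : Fin a → ZMod p // g ≠ 0}
      = ∑ q : Quotient (scalSetoid p a),
          (univ.filter (fun x : {g : Fin a → ZMod p // g ≠ 0} => ⟦x⟧ = q)).card := by
    rw [← Finset.card_univ]
    exact Finset.card_eq_sum_card_fiberwise (fun x _ => Finset.mem_univ _)
  have h2 : Fintype.card {g : Fin a → ZMod p // g ≠ 0} = p ^ a - 1 := by
    rw [Fintype.card_subtype, Finset.filter_ne', Finset.card_erase_of_mem (Finset.mem_univ _),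
      Finset.card_univ, Fintype.card_fun, ZMod.card, Fintype.card_fin]
  rw [← h2, h1]
  rw [Finset.sum_congr rfl fun q _ => card_class p a q, Finset.sum_const, Finset.card_univ,
    smul_eq_mul]

lemma exists_w (p d a m : ℕ) [Fact p.Prime]
    (h : (p - 1) * d + 1 = p ^ a * m) :
    ∃ w : Fin d → (Fin a → ZMod p), ∀ g : Fin a → ZMod p,
      (∑ i : Fin d, ∑ e ∈ (univ : Finset (ZMod p)).erase 0,
        (if e • w i = g then 1 else 0)) + (if g = 0 then 1 else 0) = m := by
  have hp : p.Prime := Fact.out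
  have hp2 : 2 ≤ p := hp.two_le
  have hm0 : m ≠ 0 := by rintro rfl; simp at h
  have hm1 : 1 ≤ m := Nat.one_le_iff_ne_zero.mpr hm0
  have hPpos : 0 < p ^ a := pow_pos hp.pos a
  have hsub : (p - 1) ∣ (p ^ a - 1) := by
    have := Nat.sub_dvd_pow_sub_pow p 1 a
    simpa using this
  have hA : (p ^ a - 1) * m + m = p ^ a * m := by
    rw [Nat.sub_mul, one_mul]
    have : m ≤ p ^ a * m := Nat.le_mul_of_pos_left m hPpos
    omega
  have hdvd : (p - 1) ∣ (m - 1) := by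
    have h1 : (p - 1) ∣ (p - 1) * d := Dvd.intro d rfl
    have h2 : (p - 1) ∣ (p ^ a - 1) * m := hsub.mul_right m
    have heq : m - 1 = (p - 1) * d - (p ^ a - 1) * m := by omega
    rw [heq]; exact Nat.dvd_sub h1 h2
  set z := (m - 1) / (p - 1) with hzdef
  have hz : (p - 1) * z = m - 1 := Nat.mul_div_cancel' hdvd
  have hQm : Fintype.card (Quotient (scalSetoid p a)) * (p - 1) = p ^ a - 1 := cardQ_mul p a
  have hcard : Fintype.card (Fin z ⊕ Quotient (scalSetoid p a) × Fin m) = d := by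
    rw [Fintype.card_sum, Fintype.card_prod, Fintype.card_fin, Fintype.card_fin]
    have hmul : (p - 1) * (z + Fintype.card (Quotient (scalSetoid p a)) * m)
        = (p - 1) * d := by
      rw [mul_add, hz, ← mul_assoc, mul_comm (p - 1) (Fintype.card (Quotient (scalSetoid p a))),
        hQm]
      omega
    exact Nat.eq_of_mul_eq_mul_left (by omega) hmul
  let σ : Fin z ⊕ Quotient (scalSetoid p a) × Fin m ≃ Fin d :=
    Fintype.equivOfCardEq (by rw [hcard, Fintype.card_fin])
  set w' : Fin z ⊕ Quotient (scalSetoid p a) × Fin m → (Fin a → ZMod p) :=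
    Sum.elim (fun _ => 0) (fun x => (x.1.out : {g : Fin a → ZMod p // g ≠ 0}).1) with hw'
  refine ⟨fun i => w' (σ.symm i), fun g => ?_⟩
  have hre : (∑ i : Fin d, ∑ e ∈ (univ : Finset (ZMod p)).erase 0,
        (if e • w' (σ.symm i) = g then 1 else 0))
      = ∑ j, ∑ e ∈ (univ : Finset (ZMod p)).erase 0, (if e • w' j = g then 1 else 0) :=
    Equiv.sum_comp σ.symm
      (fun j => ∑ e ∈ (univ : Finset (ZMod p)).erase 0, (if e • w' j = g then 1 else 0))
  rw [hre, Fintype.sum_sum_type]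
  by_cases hg : g = 0
  · subst hg
    have hzero : ∀ j : Fin z, (∑ e ∈ (univ : Finset (ZMod p)).erase 0,
        (if e • w' (Sum.inl j) = 0 then 1 else 0)) = p - 1 := by
      intro j
      have : ∀ e ∈ (univ : Finset (ZMod p)).erase 0,
          (if e • w' (Sum.inl j) = 0 then 1 else 0) = 1 := by
        intro e he
        simp [hw', smul_zero]
      rw [Finset.sum_congr rfl this, Finset.sum_const, smul_eq_mul, mul_one,
        Finset.card_erase_of_mem (Finset.mem_univ _), Finset.card_univ, ZMod.card]
    have hout : ∀ x : Quotient (scalSetoid p a) × Fin m,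
        (∑ e ∈ (univ : Finset (ZMod p)).erase 0,
          (if e • w' (Sum.inr x) = 0 then 1 else 0)) = 0 := by
      intro x
      refine Finset.sum_eq_zero fun e he => ?_
      rw [if_neg]
      exact smul_ne_zero (Finset.mem_erase.mp he).1 x.1.out.2
    rw [Finset.sum_congr rfl fun j _ => hzero j, Finset.sum_congr rfl fun x _ => hout x]
    simp only [Finset.sum_const, Finset.card_univ, Fintype.card_fin, smul_eq_mul, mul_zero,
      add_zero, ite_true, if_pos]
    have hz' : z * (p - 1) = m - 1 := by rw [mul_comm]; exact hz
    omega
  · have hzero : ∀ j : Fin z, (∑ e ∈ (univ : Finset (ZMod p)).erase 0,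
        (if e • w' (Sum.inl j) = g then 1 else 0)) = 0 := by
      intro j
      refine Finset.sum_eq_zero fun e he => ?_
      rw [if_neg]
      simpa [hw', smul_zero] using Ne.symm hg
    have hout : ∀ x : Quotient (scalSetoid p a) × Fin m,
        (∑ e ∈ (univ : Finset (ZMod p)).erase 0,
          (if e • w' (Sum.inr x) = g then 1 else 0))
        = if ⟦(⟨g, hg⟩ : {g : Fin a → ZMod p // g ≠ 0})⟧ = x.1 then 1 else 0 :=
      fun x => count_orbit p a x.1 g hg
    rw [Finset.sum_congr rfl fun j _ => hzero j, Finset.sum_congr rfl fun x _ => hout x,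
      Fintype.sum_prod_type]
    have hinner : ∀ q : Quotient (scalSetoid p a), (∑ _x : Fin m,
        if ⟦(⟨g, hg⟩ : {g : Fin a → ZMod p // g ≠ 0})⟧ = q then 1 else 0)
        = m * if ⟦(⟨g, hg⟩ : {g : Fin a → ZMod p // g ≠ 0})⟧ = q then 1 else 0 := by
      intro q; rw [Finset.sum_const, Finset.card_univ, Fintype.card_fin, smul_eq_mul]
    rw [Finset.sum_congr rfl fun q _ => hinner q, ← Finset.mul_sum,
      Finset.sum_ite_eq (univ : Finset (Quotient (scalSetoid p a)))]
    simp [hg]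


lemma sum_fin_erase {M : Type*} [AddCommMonoid M] {p : ℕ} [NeZero p] (b : Fin p)
    (F : ZMod p → M) :
    ∑ c ∈ (univ : Finset (Fin p)).erase b, F (((c : ℕ) : ZMod p) - ((b : ℕ) : ZMod p))
      = ∑ e ∈ (univ : Finset (ZMod p)).erase 0, F e := by
  have hinj : ∀ c c' : Fin p, ((c : ℕ) : ZMod p) = ((c' : ℕ) : ZMod p) → c = c' := by
    intro c c' hcc
    apply Fin.ext
    rw [← ZMod.val_cast_of_lt c.2, ← ZMod.val_cast_of_lt c'.2, hcc]
  refine Finset.sum_bij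
    (fun (c : Fin p) (_ : c ∈ (univ : Finset (Fin p)).erase b) =>
      ((c : ℕ) : ZMod p) - ((b : ℕ) : ZMod p)) ?_ ?_ ?_ ?_
  · intro c hc
    rw [Finset.mem_erase] at hc
    rw [Finset.mem_erase]
    refine ⟨?_, Finset.mem_univ _⟩
    rw [sub_ne_zero]
    exact fun hcb => hc.1 (hinj c b hcb)
  · intro c₁ h₁ c₂ h₂ hEq
    apply hinj
    have := congrArg (· + ((b : ℕ) : ZMod p)) hEq
    simpa [sub_add_cancel] using this
  · intro e he
    rw [Finset.mem_erase] at he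
    have hv : (((e + ((b : ℕ) : ZMod p)).val : ℕ) : ZMod p) = e + ((b : ℕ) : ZMod p) :=
      ZMod.natCast_rightInverse _
    refine ⟨⟨(e + ((b : ℕ) : ZMod p)).val, ZMod.val_lt _⟩, ?_, ?_⟩
    · rw [Finset.mem_erase]
      refine ⟨?_, Finset.mem_univ _⟩
      intro hcb
      apply he.1
      have h2 := congrArg (fun c : Fin p => ((c : ℕ) : ZMod p)) hcb
      simp only at h2
      rw [hv] at h2
      exact add_eq_right.mp h2
    · show (((((e + ((b : ℕ) : ZMod p)).val : ℕ)) : ZMod p)) - ((b : ℕ) : ZMod p) = e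
      rw [hv, add_sub_cancel_right]
  · intros; rfl

lemma hamming_backward (p d a m k : ℕ) (hp : p.Prime)
    (h : (p - 1) * d + 1 = p ^ a * m) (hk1 : k ≤ (p - 1) * d + 1) (hk2 : m ∣ k) :
    ∃ f, EffDom (hammingGraph p d) 1 k f := by
  haveI : Fact p.Prime := ⟨hp⟩
  have hm0 : m ≠ 0 := by rintro rfl; simp at h
  have hmpos : 0 < m := Nat.pos_of_ne_zero hm0
  obtain ⟨w, hw⟩ := exists_w p d a m h
  set t := k / m with htdef
  have htk : m * t = k := Nat.mul_div_cancel' hk2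
  have ht : t ≤ p ^ a := by
    have h1 : m * t ≤ p ^ a * m := by rw [htk]; omega
    rw [mul_comm (p ^ a) m] at h1
    exact Nat.le_of_mul_le_mul_left h1 hmpos
  have hcardG : t ≤ (univ : Finset (Fin a → ZMod p)).card := by
    rw [Finset.card_univ, Fintype.card_fun, ZMod.card, Fintype.card_fin]
    exact ht
  obtain ⟨T, -, hTcard⟩ := Finset.exists_subset_card_eq hcardG
  set φ : (Fin d → Fin p) → (Fin a → ZMod p) :=
    fun x => ∑ i, ((x i : ℕ) : ZMod p) • w i with hφ
  refine ⟨fun x => if φ x ∈ T then 1 else 0, fun x => by dsimp only; split <;> omega, ?_⟩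
  intro v
  rw [← sum_nbhd v (fun u => if φ u ∈ T then 1 else 0), Finset.sum_sigma]
  set G : (Fin a → ZMod p) → ℕ := fun g => if φ v + g ∈ T then 1 else 0 with hG
  have hupd : ∀ (i : Fin d) (c : Fin p),
      φ (Function.update v i c)
        = φ v + ((((c : ℕ) : ZMod p)) - (((v i : ℕ)) : ZMod p)) • w i := by
    intro i c
    have hfun : ∀ j, (((Function.update v i c j : ℕ)) : ZMod p) • w j
        = Function.update (fun j => (((v j : ℕ)) : ZMod p) • w j) i
            ((((c : ℕ)) : ZMod p) • w i) j := by
      intro j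
      rcases eq_or_ne j i with rfl | hj
      · simp
      · simp [Function.update_of_ne hj]
    have h1 : φ (Function.update v i c)
        = (((c : ℕ) : ZMod p)) • w i + ∑ j ∈ univ \ {i}, (((v j : ℕ)) : ZMod p) • w j := by
      simp only [hφ]
      rw [Finset.sum_congr rfl fun j _ => hfun j, Finset.sum_update_of_mem (Finset.mem_univ i)]
    have h2 : φ v
        = ((((v i : ℕ)) : ZMod p)) • w i + ∑ j ∈ univ \ {i}, (((v j : ℕ)) : ZMod p) • w j := by
      simp only [hφ]
      rw [← Finset.add_sum_erase _ _ (Finset.mem_univ i), Finset.erase_eq]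
    rw [h1, h2, sub_smul]
    abel
  have step1 : ∀ i : Fin d, (∑ c ∈ univ.erase (v i),
      if φ (Function.update v i c) ∈ T then 1 else 0)
      = ∑ e ∈ (univ : Finset (ZMod p)).erase 0, G (e • w i) := by
    intro i
    have hc : ∀ c ∈ univ.erase (v i), (if φ (Function.update v i c) ∈ T then 1 else 0)
        = G (((((c : ℕ)) : ZMod p) - (((v i : ℕ)) : ZMod p)) • w i) := by
      intro c _
      simp only [hG]
      rw [hupd i c]
    rw [Finset.sum_congr rfl hc]
    exact sum_fin_erase (v i) (fun e => G (e • w i))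
  rw [Finset.sum_congr rfl fun i (_ : i ∈ univ) => step1 i]
  have hpt : ∀ (i : Fin d), ∀ e ∈ (univ : Finset (ZMod p)).erase 0, G (e • w i)
      = ∑ g : Fin a → ZMod p, if e • w i = g then G g else 0 := by
    intro i e _
    rw [Finset.sum_ite_eq]
    simp
  have step2 : (∑ i : Fin d, ∑ e ∈ (univ : Finset (ZMod p)).erase 0, G (e • w i))
      = ∑ g : Fin a → ZMod p,
          (∑ i : Fin d, ∑ e ∈ (univ : Finset (ZMod p)).erase 0,
            if e • w i = g then 1 else 0) * G g := by
    rw [Finset.sum_congr rfl fun i _ => Finset.sum_congr rfl (hpt i)]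
    rw [Finset.sum_congr rfl fun i (_ : i ∈ univ) => Finset.sum_comm]
    rw [Finset.sum_comm]
    refine Finset.sum_congr rfl fun g _ => ?_
    rw [Finset.sum_mul]
    refine Finset.sum_congr rfl fun i _ => ?_
    rw [Finset.sum_mul]
    refine Finset.sum_congr rfl fun e _ => ?_
    rw [ite_mul, one_mul, zero_mul]
  rw [step2]
  have hG0 : (if φ v ∈ T then 1 else 0) = G 0 := by simp only [hG, add_zero]
  have hcnt0 : (∑ i : Fin d, ∑ e ∈ (univ : Finset (ZMod p)).erase 0,
      if e • w i = 0 then 1 else 0) = m - 1 := by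
    have := hw 0
    rw [if_pos rfl] at this
    omega
  have hcntne : ∀ g ∈ (univ : Finset (Fin a → ZMod p)).erase 0,
      (∑ i : Fin d, ∑ e ∈ (univ : Finset (ZMod p)).erase 0,
        if e • w i = g then 1 else 0) * G g = m * G g := by
    intro g hg
    rw [Finset.mem_erase] at hg
    have := hw g
    rw [if_neg hg.1, add_zero] at this
    rw [this]
  beta_reduce
  rw [hG0, ← Finset.add_sum_erase _
    (fun g => (∑ i : Fin d, ∑ e ∈ (univ : Finset (ZMod p)).erase 0,
      if e • w i = g then 1 else 0) * G g) (Finset.mem_univ 0)]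
  rw [hcnt0, Finset.sum_congr rfl hcntne]
  have h1 : G 0 + (m - 1) * G 0 = m * G 0 := by
    nth_rewrite 1 [← one_mul (G 0)]
    rw [← add_mul]
    congr 1
    omega
  rw [← add_assoc, h1, ← Finset.mul_sum, ← mul_add,
    Finset.add_sum_erase _ G (Finset.mem_univ 0)]
  have hsumT : ∑ g : Fin a → ZMod p, G g = T.card := by
    simp only [hG]
    rw [Fintype.sum_equiv (Equiv.addLeft (φ v)) (fun g => if φ v + g ∈ T then 1 else 0)
      (fun y => if y ∈ T then 1 else 0) (fun g => rfl)]
    simp [Finset.sum_ite_mem]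
  rw [hsumT, hTcard]
  exact htk

theorem stmt18 (p d a m : ℕ) (hp : p.Prime)
    (h : (p - 1) * d + 1 = p ^ a * m) (hm : ¬ p ∣ m) (k : ℕ) :
    (∃ f, EffDom (hammingGraph p d) 1 k f) ↔ (k ≤ (p - 1) * d + 1 ∧ m ∣ k) := by
  constructor
  · rintro ⟨f, hf1, hf2⟩
    have hppos : 0 < p := hp.pos
    constructor
    · set v : Fin d → Fin p := fun _ => ⟨0, hppos⟩ with hv
      calc k = f v + ∑ u ∈ (hammingGraph p d).neighborFinset v, f u := (hf2 v).symm
        _ ≤ 1 + ∑ u ∈ (hammingGraph p d).neighborFinset v, 1 :=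
            add_le_add (hf1 v) (Finset.sum_le_sum fun u _ => hf1 u)
        _ = 1 + d * (p - 1) := by rw [Finset.sum_const, smul_eq_mul, mul_one, deg_hamming]
        _ ≤ (p - 1) * d + 1 := by rw [mul_comm]; omega
    · have e1 : ∑ v : Fin d → Fin p, (f v + ∑ u ∈ (hammingGraph p d).neighborFinset v, f u)
          = p ^ d * k := by
        rw [Finset.sum_congr rfl fun v _ => hf2 v, Finset.sum_const, smul_eq_mul,
          Finset.card_univ]
        congr 1
        rw [Fintype.card_fun]
        simp
      have e2 : ∑ v : Fin d → Fin p, (f v + ∑ u ∈ (hammingGraph p d).neighborFinset v, f u)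
          = (∑ u, f u) * (p ^ a * m) := by
        rw [Finset.sum_add_distrib]
        have swap : ∑ v : Fin d → Fin p, ∑ u ∈ (hammingGraph p d).neighborFinset v, f u
            = ∑ u : Fin d → Fin p, (d * (p - 1)) * f u := by
          have hfil : ∀ v : Fin d → Fin p, ∑ u ∈ (hammingGraph p d).neighborFinset v, f u
              = ∑ u : Fin d → Fin p, if (hammingGraph p d).Adj v u then f u else 0 := by
            intro v
            rw [SimpleGraph.neighborFinset_eq_filter, Finset.sum_filter]
          rw [Finset.sum_congr rfl fun v _ => hfil v, Finset.sum_comm]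
          refine Finset.sum_congr rfl fun u _ => ?_
          have hcomm : ∀ v : Fin d → Fin p,
              (hammingGraph p d).Adj v u ↔ (hammingGraph p d).Adj u v :=
            fun v => (hammingGraph p d).adj_comm v u
          calc ∑ v : Fin d → Fin p, (if (hammingGraph p d).Adj v u then f u else 0)
              = ∑ v ∈ Finset.univ.filter (fun v => (hammingGraph p d).Adj v u), f u := by
                rw [Finset.sum_filter]
            _ = ∑ v ∈ (hammingGraph p d).neighborFinset u, f u := by
                congr 1
                rw [SimpleGraph.neighborFinset_eq_filter]
                exact Finset.filter_congr fun v _ => by rw [hcomm v]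
            _ = (d * (p - 1)) * f u := by
                rw [Finset.sum_const, smul_eq_mul, deg_hamming]
        rw [swap, ← Finset.sum_add_distrib, ← h, Finset.sum_mul]
        refine Finset.sum_congr rfl fun u _ => ?_
        rw [mul_comm d (p - 1)]
        ring
      have heq : p ^ d * k = (∑ u, f u) * (p ^ a * m) := by rw [← e1, e2]
      have hdvd : m ∣ p ^ d * k := ⟨p ^ a * (∑ u, f u), by rw [heq]; ring⟩
      have hcop : Nat.Coprime m (p ^ d) :=
        Nat.Coprime.symm (Nat.Coprime.pow_left d (hp.coprime_iff_not_dvd.mpr hm))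
      exact hcop.dvd_of_dvd_mul_left hdvd
  · rintro ⟨hk1, hk2⟩
    exact hamming_backward p d a m k hp h hk1 hk2
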